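/- Assume λθ > Nμ. If δ* ∈ (0, N/(λθ)) satisfies 1/(1+δ*μ) = δ*λ²θ²Δ_cr(δ*)/(N² - δ*²λ²θ²), then δ* > δ₁, where δ₁ = (-(Δ₀ + N/(λθ))λθ + sqrt(λ²θ²(Δ₀ + N/(λθ))² + 4N²(Δ₀ + N/(λθ))μ + 4N²))/(2λθ(1 + (Δ₀ + N/(λθ))μ)) and Δ₀ = arccos(-Nμ/(λθ))·sqrt(N²/(λ²θ² - N²μ²)). -/

import Mathlib

open Real Set

noncomputable def Dcr (lam mu th : ℝ) (N : ℕ) (d : ℝ) : ℝ :=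
  Real.arccos (-(d * lam^2 * th^2 + (N : ℝ)^2 * mu) / ((N : ℝ) * lam * th * (1 + d * mu))) *
    Real.sqrt (((N : ℝ)^2 - d^2 * lam^2 * th^2) / (lam^2 * th^2 - (N : ℝ)^2 * mu^2))

noncomputable def Delta0 (lam mu th : ℝ) (N : ℕ) : ℝ :=
  Real.arccos (-((N : ℝ) * mu) / (lam * th)) *
    Real.sqrt ((N : ℝ)^2 / (lam^2 * th^2 - (N : ℝ)^2 * mu^2))

lemma sin_ge_mul_cos {t : ℝ} (h0 : 0 ≤ t) (h2 : t < π/2) : t * Real.cos t ≤ Real.sin t := by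
  rcases eq_or_lt_of_le h0 with h | h
  · simp [← h]
  · have hc : 0 < Real.cos t := Real.cos_pos_of_mem_Ioo ⟨by linarith [Real.pi_pos], h2⟩
    have := Real.lt_tan h h2
    rw [Real.tan_eq_sin_div_cos] at this
    calc t * Real.cos t ≤ (Real.sin t / Real.cos t) * Real.cos t := by
          exact mul_le_mul_of_nonneg_right this.le hc.le
      _ = Real.sin t := by field_simp

lemma arccos_sub_arccos_le {x y : ℝ} (hx0 : 0 ≤ x) (hxy : x ≤ y) (hy1 : y < 1) :
    Real.arccos x - Real.arccos y ≤ (y - x) / Real.sqrt (1 - y^2) := by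
  set α := Real.arcsin y with hα
  set β := Real.arcsin x with hβ
  have hy0 : 0 ≤ y := hx0.trans hxy
  have hβ0 : 0 ≤ β := Real.arcsin_nonneg.mpr hx0
  have hβα : β ≤ α := Real.monotone_arcsin hxy
  have hα2 : α < π/2 := Real.arcsin_lt_pi_div_two.mpr hy1
  have hcosα : Real.cos α = Real.sqrt (1 - y^2) := Real.cos_arcsin y
  have hcospos : 0 < Real.cos α := Real.cos_pos_of_mem_Ioo ⟨by linarith [Real.pi_pos, Real.arcsin_nonneg.mpr hy0], hα2⟩
  have hsinα : Real.sin α = y := Real.sin_arcsin (by linarith) hy1.le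
  have hsinβ : Real.sin β = x := Real.sin_arcsin (by linarith) (hxy.trans hy1.le)
  have harc : Real.arccos x - Real.arccos y = α - β := by
    rw [Real.arccos_eq_pi_div_two_sub_arcsin, Real.arccos_eq_pi_div_two_sub_arcsin]; ring
  rw [harc, ← hcosα, ← hsinα, ← hsinβ, le_div_iff₀ hcospos]
  -- goal : (α - β) * cos α ≤ sin α - sin β
  have hsub : Real.sin α - Real.sin β = 2 * Real.sin ((α-β)/2) * Real.cos ((α+β)/2) :=
    Real.sin_sub_sin α β
  set t := (α-β)/2 with ht
  set s := (α+β)/2 with hs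
  have ht0 : 0 ≤ t := by rw [ht]; linarith
  have ht2 : t < π/2 := by rw [ht]; linarith
  have hkey : t * Real.cos t ≤ Real.sin t := sin_ge_mul_cos ht0 ht2
  have hprod : 2 * Real.cos t * Real.cos s = Real.cos α + Real.cos β := by
    have h1 : α = s + t := by rw [hs, ht]; ring
    have h2 : β = s - t := by rw [hs, ht]; ring
    rw [h1, h2, Real.cos_add, Real.cos_sub]; ring
  have hα0 : 0 ≤ α := le_trans hβ0 hβα
  have hαπ : α ≤ π := by linarith [Real.pi_pos]
  have hct : Real.cos α ≤ Real.cos t := Real.cos_le_cos_of_nonneg_of_le_pi ht0 hαπ (by rw [ht]; linarith)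
  have hcs : Real.cos α ≤ Real.cos s := Real.cos_le_cos_of_nonneg_of_le_pi (by rw [hs]; linarith) hαπ (by rw [hs]; linarith)
  have hcs0 : 0 ≤ Real.cos s := le_trans hcospos.le hcs
  have hcβ : Real.cos α ≤ Real.cos β := Real.cos_le_cos_of_nonneg_of_le_pi hβ0 hαπ hβα
  rw [hsub]
  nlinarith [mul_le_mul_of_nonneg_right hkey hcs0, mul_le_mul_of_nonneg_left hcβ ht0,
    mul_le_mul_of_nonneg_left hcs ht0, mul_le_mul_of_nonneg_left hct ht0]

lemma key_ineq {r k : ℝ} (hr0 : 0 < r) (hr1 : r < 1) (hk0 : 0 < k) (hk1 : k < 1) :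
    Real.arccos (-((r+k)/(1+r*k))) * Real.sqrt (1 - r^2)
      ≤ Real.arccos (-k) + r * Real.sqrt (1 - k^2) := by
  have hd : (0:ℝ) < 1 + r*k := by nlinarith
  set c := (r+k)/(1+r*k) with hc
  have hkc : k ≤ c := by
    rw [hc, le_div_iff₀ hd]
    nlinarith [mul_nonneg hr0.le (show (0:ℝ) ≤ 1 - k^2 by nlinarith)]
  have hc1 : c < 1 := by
    rw [hc, div_lt_one hd]
    nlinarith [mul_pos (show (0:ℝ) < 1-r by linarith) (show (0:ℝ) < 1-k by linarith)]
  have hc0 : 0 ≤ c := le_trans hk0.le hkc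
  have hM : Real.arccos k - Real.arccos c ≤ (c - k) / Real.sqrt (1 - c^2) :=
    arccos_sub_arccos_le hk0.le hkc hc1
  have hsq : Real.sqrt (1 - c^2) = Real.sqrt (1 - r^2) * Real.sqrt (1 - k^2) / (1 + r*k) := by
    have h1 : 1 - c^2 = ((1 - r^2) * (1 - k^2)) / (1 + r*k)^2 := by
      rw [hc]; field_simp; ring
    rw [h1, Real.sqrt_div (le_of_lt (mul_pos (by nlinarith) (by nlinarith))),
      Real.sqrt_mul (by nlinarith : (0:ℝ) ≤ 1 - r^2), Real.sqrt_sq hd.le]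
  have hck : c - k = r * (1 - k^2) / (1 + r*k) := by rw [hc]; field_simp; ring
  have hur : 0 < Real.sqrt (1 - r^2) := Real.sqrt_pos.mpr (by nlinarith)
  have huk : 0 < Real.sqrt (1 - k^2) := Real.sqrt_pos.mpr (by nlinarith)
  have hkk : Real.sqrt (1 - k^2) ^ 2 = 1 - k^2 := Real.sq_sqrt (by nlinarith)
  have hquot : (c - k) / Real.sqrt (1 - c^2) = r * Real.sqrt (1 - k^2) / Real.sqrt (1 - r^2) := by
    rw [hck, hsq]
    field_simp
    linear_combination (-1) * hkk
  rw [hquot] at hM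
  have hM2 : (Real.arccos k - Real.arccos c) * Real.sqrt (1 - r^2) ≤ r * Real.sqrt (1 - k^2) := by
    calc (Real.arccos k - Real.arccos c) * Real.sqrt (1 - r^2)
        ≤ (r * Real.sqrt (1 - k^2) / Real.sqrt (1 - r^2)) * Real.sqrt (1 - r^2) :=
          mul_le_mul_of_nonneg_right hM hur.le
      _ = r * Real.sqrt (1 - k^2) := div_mul_cancel₀ _ (ne_of_gt hur)
  rw [Real.arccos_neg, Real.arccos_neg]
  have hu1 : Real.sqrt (1 - r^2) ≤ 1 := Real.sqrt_le_one.mpr (by nlinarith)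
  have hπc : 0 ≤ π - Real.arccos k := by linarith [Real.arccos_le_pi k]
  nlinarith [hM2, mul_le_mul_of_nonneg_left hu1 hπc]

lemma quad_root_bound {r k B' : ℝ} (hr0 : 0 < r) (hk0 : 0 < k) (hB : 1 ≤ B')
    (h : 1 - r^2 < B' * r * (1 + r*k)) :
    (-B' + Real.sqrt (B'^2 + 4*B'*k + 4)) / (2*(1 + B'*k)) < r := by
  have hden : (0:ℝ) < 1 + B'*k := by nlinarith
  rw [div_lt_iff₀ (by linarith)]
  have h2 : Real.sqrt (B'^2 + 4*B'*k + 4) < 2*(1+B'*k)*r + B' := by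
    rw [Real.sqrt_lt' (by nlinarith)]
    nlinarith [mul_pos hden (mul_pos hr0 hden)]
  nlinarith

set_option maxHeartbeats 1000000 in
theorem dmax_lower_bound
    (lam mu th : ℝ) (N : ℕ) (hN : 0 < N)
    (hlam : 0 < lam) (hmu : 0 < mu) (hth : 0 < th)
    (hgt : lam * th > N * mu)
    (dstar : ℝ) (hdstar : dstar ∈ Set.Ioo (0 : ℝ) ((N : ℝ) / (lam * th)))
    (hcrit : 1 / (1 + dstar * mu)
        = dstar * lam^2 * th^2 * Dcr lam mu th N dstar
          / ((N : ℝ)^2 - dstar^2 * lam^2 * th^2)) :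
    dstar >
      (-((Delta0 lam mu th N + (N : ℝ) / (lam * th)) * lam * th)
        + Real.sqrt (lam^2 * th^2 * (Delta0 lam mu th N + (N : ℝ) / (lam * th))^2
            + 4 * (N : ℝ)^2 * (Delta0 lam mu th N + (N : ℝ) / (lam * th)) * mu
            + 4 * (N : ℝ)^2))
      / (2 * lam * th * (1 + (Delta0 lam mu th N + (N : ℝ) / (lam * th)) * mu)) := by
  obtain ⟨hd0, hd1⟩ := hdstar
  set n : ℝ := (N : ℝ) with hn_def
  have hn : 0 < n := by rw [hn_def]; exact_mod_cast hN
  have hA : 0 < lam * th := mul_pos hlam hth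
  set k : ℝ := n * mu / (lam * th) with hk_def
  set r : ℝ := dstar * (lam * th) / n with hr_def
  have hk0 : 0 < k := by rw [hk_def]; positivity
  have hk1 : k < 1 := by rw [hk_def, div_lt_one hA]; exact hgt
  have hr0 : 0 < r := by rw [hr_def]; positivity
  have hr1 : r < 1 := by
    rw [hr_def, div_lt_one hn]
    calc dstar * (lam * th) < (n / (lam * th)) * (lam * th) :=
          mul_lt_mul_of_pos_right hd1 hA
      _ = n := by field_simp
  have hlam' : lam ≠ 0 := ne_of_gt hlam
  have hth' : th ≠ 0 := ne_of_gt hth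
  have hn' : n ≠ 0 := ne_of_gt hn
  have hden1 : (0:ℝ) < 1 + dstar * mu := by positivity
  have hrk : dstar * mu = r * k := by rw [hr_def, hk_def]; field_simp
  have hrk1 : (0:ℝ) < 1 + r * k := by nlinarith [mul_pos hr0 hk0]
  have h1k2 : (0:ℝ) < 1 - k^2 := by nlinarith
  have h1r2 : (0:ℝ) < 1 - r^2 := by nlinarith
  have hsk : 0 < Real.sqrt (1 - k^2) := Real.sqrt_pos.mpr h1k2
  have hsr : 0 < Real.sqrt (1 - r^2) := Real.sqrt_pos.mpr h1r2
  clear_value n k r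
  -- Delta0 in scaled form
  have hD0 : Delta0 lam mu th N = (n / (lam*th)) * (Real.arccos (-k) / Real.sqrt (1 - k^2)) := by
    simp only [Delta0, ← hn_def]
    have harg : -(n * mu) / (lam * th) = -k := by rw [hk_def]; ring
    have hin : n^2 / (lam^2 * th^2 - n^2 * mu^2) = n^2 / ((lam*th)^2 * (1 - k^2)) := by
      rw [hk_def]; field_simp
    rw [harg, hin, Real.sqrt_div (sq_nonneg n), Real.sqrt_mul (sq_nonneg (lam*th)),
      Real.sqrt_sq hn.le, Real.sqrt_sq hA.le]
    field_simp
  -- Dcr in scaled form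
  have hDcr : Dcr lam mu th N dstar
      = Real.arccos (-((r+k)/(1+r*k))) * ((n/(lam*th)) * (Real.sqrt (1-r^2) / Real.sqrt (1-k^2))) := by
    simp only [Dcr, ← hn_def]
    have harg : -(dstar * lam^2 * th^2 + n^2 * mu) / (n * lam * th * (1 + dstar * mu))
        = -((r+k)/(1+r*k)) := by
      rw [hrk]
      rw [(neg_div (1+r*k) (r+k)).symm,
        div_eq_div_iff (by exact ne_of_gt (by nlinarith [mul_pos (mul_pos (mul_pos hn hlam) hth) hrk1] : (0:ℝ) < n * lam * th * (1 + r*k))) (ne_of_gt hrk1)]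
      rw [hr_def, hk_def]
      field_simp
    have hin : (n^2 - dstar^2 * lam^2 * th^2) / (lam^2 * th^2 - n^2 * mu^2)
        = (n^2 * (1 - r^2)) / ((lam*th)^2 * (1 - k^2)) := by
      rw [hr_def, hk_def]; field_simp
    rw [harg, hin, Real.sqrt_div (mul_nonneg (sq_nonneg n) h1r2.le),
      Real.sqrt_mul (sq_nonneg n), Real.sqrt_mul (sq_nonneg (lam*th)),
      Real.sqrt_sq hn.le, Real.sqrt_sq hA.le]
    ring
  -- critical equation in scaled form
  have hns : n^2 - dstar^2 * lam^2 * th^2 = n^2 * (1 - r^2) := by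
    rw [hr_def]; field_simp
  have hEq : Real.arccos (-((r+k)/(1+r*k))) * Real.sqrt (1-r^2) * (r * (1+r*k))
      = (1-r^2) * Real.sqrt (1-k^2) := by
    have h2 := hcrit
    rw [hns, hrk, hDcr] at h2
    have hds2 : dstar = r * n / (lam*th) := by rw [hr_def]; field_simp
    rw [hds2] at h2
    field_simp at h2
    linear_combination -h2
  -- combine with key inequality
  set B' : ℝ := Real.arccos (-k) / Real.sqrt (1 - k^2) + 1 with hB'_def
  have hB'1 : 1 ≤ B' := by
    have h5 : 0 ≤ Real.arccos (-k) / Real.sqrt (1 - k^2) :=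
      div_nonneg (Real.arccos_nonneg _) hsk.le
    rw [hB'_def]; linarith
  have hack : Real.arccos (-k) = (B' - 1) * Real.sqrt (1 - k^2) := by
    rw [hB'_def]; field_simp; ring
  have hlt2 : 1 - r^2 < B' * r * (1 + r*k) := by
    have h3 := key_ineq hr0 hr1 hk0 hk1
    rw [hack] at h3
    -- multiply h3 by r*(1+r*k) > 0 and use hEq
    have h6 : (1-r^2) * Real.sqrt (1-k^2)
        ≤ ((B' - 1) * Real.sqrt (1-k^2) + r * Real.sqrt (1-k^2)) * (r * (1+r*k)) := by
      rw [← hEq]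
      exact mul_le_mul_of_nonneg_right h3 (le_of_lt (mul_pos hr0 hrk1))
    have h7 : (1-r^2) ≤ (B' - 1 + r) * (r * (1+r*k)) := by
      have h8 : ((B' - 1) * Real.sqrt (1-k^2) + r * Real.sqrt (1-k^2)) * (r * (1+r*k))
          = ((B' - 1 + r) * (r * (1+r*k))) * Real.sqrt (1-k^2) := by ring
      rw [h8] at h6
      exact le_of_mul_le_mul_right (by linarith [h6]) hsk
    nlinarith [mul_pos hr0 hrk1]
  have hroot := quad_root_bound hr0 hk0 hB'1 hlt2
  -- rewrite the goal
  have hBfull : Delta0 lam mu th N + n/(lam*th) = (n/(lam*th)) * B' := by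
    rw [hD0, hB'_def]; ring
  rw [hBfull]
  have hmu2 : mu = k * (lam*th) / n := by rw [hk_def]; field_simp
  have hin2 : lam^2*th^2*((n/(lam*th))*B')^2 + 4*n^2*((n/(lam*th))*B')*mu + 4*n^2
      = n^2 * (B'^2 + 4*B'*k + 4) := by
    rw [hmu2]; field_simp
  rw [hin2, Real.sqrt_mul (sq_nonneg n), Real.sqrt_sq hn.le]
  have hnum : -((n/(lam*th))*B' * lam * th) = -(n * B') := by field_simp
  have hden2 : 2 * lam * th * (1 + (n/(lam*th))*B' * mu) = 2 * (lam*th) * (1 + B'*k) := by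
    rw [hmu2]; field_simp
  rw [hnum, hden2]
  have hposden : (0:ℝ) < 1 + B'*k := by
    have hB0 : (0:ℝ) < B' := lt_of_lt_of_le zero_lt_one hB'1
    have := mul_pos hB0 hk0
    linarith
  have hfinal : (-(n * B') + n * Real.sqrt (B'^2 + 4*B'*k + 4)) / (2 * (lam*th) * (1 + B'*k))
      = (n/(lam*th)) * ((-B' + Real.sqrt (B'^2 + 4*B'*k + 4)) / (2*(1 + B'*k))) := by
    field_simp
  rw [hfinal]
  have hds3 : dstar = (n/(lam*th)) * r := by rw [hr_def]; field_simp
  rw [hds3]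
  exact mul_lt_mul_of_pos_left hroot (by positivity)
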